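/- For all u, v ∈ V, setting w = u − v, one has Re ∑ₙ (Bₙ(u, u) − Bₙ(v, v))·w̄ₙ = Re ∑ₙ Bₙ(w, v)·w̄ₙ, i.e. (B(u, u) − B(v, v), w) = (B(w, v), w). -/

import Mathlib

open Complex MeasureTheory Filter Topology

noncomputable section

/-- The wave numbers `kₙ = k₀ · 2ⁿ`. -/
def kk (k₀ : ℝ) (n : ℕ) : ℝ := k₀ * 2 ^ n

/-- The GOY nonlinearity `B(u,v)ₙ`; sequences are indexed from `1`, with the
convention that the `0`-th entry (playing the role of `u₀ = u₋₁ = 0`) vanishes. -/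
def goyB (k₀ : ℝ) (u v : ℕ → ℂ) (n : ℕ) : ℂ :=
  if n = 0 then 0 else
    Complex.I * (kk k₀ n : ℂ) *
      ((1 / 4) * (starRingEnd ℂ) (u (n + 1)) * (starRingEnd ℂ) (v (n - 1))
        - (1 / 2) * ((starRingEnd ℂ) (u (n + 1)) * (starRingEnd ℂ) (v (n + 2))
            + (starRingEnd ℂ) (u (n + 2)) * (starRingEnd ℂ) (v (n + 1)))
        + (1 / 8) * (starRingEnd ℂ) (u (n - 1)) * (starRingEnd ℂ) (v (n - 2)))

/-- Membership in `H`: square summability. -/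
def memH (u : ℕ → ℂ) : Prop := Summable fun n => ‖u n‖ ^ 2

/-- Membership in `V`. -/
def memV (k₀ : ℝ) (u : ℕ → ℂ) : Prop := Summable fun n => kk k₀ n ^ 2 * ‖u n‖ ^ 2

/-- `|u|² = ∑ₙ |uₙ|²`. -/
def hnormSq (u : ℕ → ℂ) : ℝ := ∑' n, ‖u n‖ ^ 2

/-- `‖u‖² = ∑ₙ kₙ²|uₙ|²`. -/
def vnormSq (k₀ : ℝ) (u : ℕ → ℂ) : ℝ := ∑' n, kk k₀ n ^ 2 * ‖u n‖ ^ 2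

/-- `‖u‖_{V'}² = ∑ₙ kₙ⁻²|uₙ|²`. -/
def vdualSq (k₀ : ℝ) (u : ℕ → ℂ) : ℝ := ∑' n, ‖u n‖ ^ 2 / kk k₀ n ^ 2

end

noncomputable section Aux

/-- A generic elementary term of the paired GOY nonlinearity. -/
def trm (k₀ : ℝ) (c : ℂ) (x y z : ℕ → ℂ) (σ τ : ℕ → ℕ) (n : ℕ) : ℂ :=
  c * Complex.I * (kk k₀ n : ℂ) * (starRingEnd ℂ) (x (σ n)) *
    (starRingEnd ℂ) (y (τ n)) * (starRingEnd ℂ) (z n)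

lemma kk_pos {k₀ : ℝ} (hk₀ : 0 < k₀) (n : ℕ) : 0 < kk k₀ n := by
  unfold kk; positivity

lemma kk_succ (k₀ : ℝ) (n : ℕ) : kk k₀ (n + 1) = 2 * kk k₀ n := by
  unfold kk; ring

lemma kk_le {k₀ : ℝ} (hk₀ : 0 < k₀) {n m : ℕ} (h : n ≤ m + 2) :
    kk k₀ n ≤ 4 * kk k₀ m := by
  unfold kk
  have h1 : (2 : ℝ) ^ n ≤ 2 ^ (m + 2) :=
    pow_le_pow_right₀ (by norm_num) h
  have h2 : (2 : ℝ) ^ (m + 2) = 4 * 2 ^ m := by ring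
  nlinarith [hk₀.le, pow_pos (show (0:ℝ) < 2 by norm_num) m]

lemma memH_of_memV {k₀ : ℝ} (hk₀ : 0 < k₀) {u : ℕ → ℂ} (hu : memV k₀ u) :
    Summable fun n => ‖u n‖ ^ 2 := by
  refine Summable.of_nonneg_of_le (fun n => by positivity) (fun n => ?_) (hu.mul_left (1 / k₀ ^ 2))
  have hone : (1 : ℝ) ≤ 2 ^ n := by
    calc (1 : ℝ) = 2 ^ (0 : ℕ) := by norm_num
    _ ≤ 2 ^ n := pow_le_pow_right₀ (by norm_num) (Nat.zero_le n)
  have hkn : k₀ ≤ kk k₀ n := by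
    unfold kk; nlinarith [hk₀.le]
  have hk2 : k₀ ^ 2 ≤ kk k₀ n ^ 2 := by nlinarith [kk_pos hk₀ n]
  have h0 : 0 ≤ ‖u n‖ ^ 2 := by positivity
  have hkp : 0 < k₀ ^ 2 := by positivity
  rw [div_mul_eq_mul_div, one_mul, le_div_iff₀ hkp]
  nlinarith

lemma bound_of_memH {y : ℕ → ℂ} (hy : Summable fun n => ‖y n‖ ^ 2) :
    ∃ M : ℝ, 0 ≤ M ∧ ∀ n, ‖y n‖ ≤ M := by
  refine ⟨Real.sqrt (∑' n, ‖y n‖ ^ 2), Real.sqrt_nonneg _, fun n => ?_⟩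
  have h1 : ‖y n‖ ^ 2 ≤ ∑' n, ‖y n‖ ^ 2 := Summable.le_tsum hy n (fun m _ => by positivity)
  have := Real.sqrt_le_sqrt h1
  rwa [Real.sqrt_sq (norm_nonneg _)] at this

lemma core_summable {k₀ : ℝ} (hk₀ : 0 < k₀) {x z : ℕ → ℂ} (σ : ℕ → ℕ)
    (hσ : ∀ n, n ≤ σ n + 2)
    (hσs : Summable fun n => kk k₀ (σ n) ^ 2 * ‖x (σ n)‖ ^ 2)
    (hz : Summable fun n => ‖z n‖ ^ 2) :
    Summable fun n => kk k₀ n * ‖x (σ n)‖ * ‖z n‖ := by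
  refine Summable.of_nonneg_of_le
    (fun n => by have := (kk_pos hk₀ n).le; positivity) (fun n => ?_)
    ((hσs.mul_left 2).add (hz.mul_left 2))
  have h4 : kk k₀ n ≤ 4 * kk k₀ (σ n) := kk_le hk₀ (hσ n)
  have hx0 : 0 ≤ ‖x (σ n)‖ := norm_nonneg _
  have hz0 : 0 ≤ ‖z n‖ := norm_nonneg _
  nlinarith [sq_nonneg (kk k₀ (σ n) * ‖x (σ n)‖ - ‖z n‖), (kk_pos hk₀ (σ n)).le,
    mul_nonneg hx0 hz0]

lemma trm_summable {k₀ : ℝ} (hk₀ : 0 < k₀) (c : ℂ) {x y z : ℕ → ℂ} (σ τ : ℕ → ℕ)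
    (hσ : ∀ n, n ≤ σ n + 2)
    (hσs : Summable fun n => kk k₀ (σ n) ^ 2 * ‖x (σ n)‖ ^ 2)
    {M : ℝ} (hM : 0 ≤ M) (hy : ∀ n, ‖y n‖ ≤ M)
    (hz : Summable fun n => ‖z n‖ ^ 2) :
    Summable (trm k₀ c x y z σ τ) := by
  have hcore := core_summable hk₀ σ hσ hσs hz
  apply Summable.of_norm
  refine Summable.of_nonneg_of_le (fun n => norm_nonneg _) (fun n => ?_)
    (hcore.mul_left (‖c‖ * M))
  unfold trm
  have hk : ‖((kk k₀ n : ℝ) : ℂ)‖ = kk k₀ n := by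
    rw [Complex.norm_real, Real.norm_eq_abs, abs_of_pos (kk_pos hk₀ n)]
  simp only [norm_mul, Complex.norm_I, mul_one, hk, RCLike.norm_conj]
  have hyt := hy (τ n)
  have hkn := (kk_pos hk₀ n).le
  nlinarith [norm_nonneg c, norm_nonneg (x (σ n)), norm_nonneg (z n),
    norm_nonneg (y (τ n)),
    mul_nonneg (mul_nonneg hkn (norm_nonneg (x (σ n)))) (norm_nonneg (z n)),
    mul_nonneg (norm_nonneg c)
      (mul_nonneg (mul_nonneg hkn (norm_nonneg (x (σ n)))) (norm_nonneg (z n)))]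

lemma shiftV_add {k₀ : ℝ} {x : ℕ → ℂ} (hx : memV k₀ x) (i : ℕ) :
    Summable fun n => kk k₀ (n + i) ^ 2 * ‖x (n + i)‖ ^ 2 :=
  (summable_nat_add_iff (f := fun n => kk k₀ n ^ 2 * ‖x n‖ ^ 2) i).mpr hx

lemma shiftV_sub {k₀ : ℝ} {x : ℕ → ℂ} (hx : memV k₀ x) :
    Summable fun n => kk k₀ (n - 1) ^ 2 * ‖x (n - 1)‖ ^ 2 := by
  apply (summable_nat_add_iff (f := fun n => kk k₀ (n - 1) ^ 2 * ‖x (n - 1)‖ ^ 2) 1).mp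
  simpa [memV] using hx

/-- Decomposition of a paired GOY term into four elementary terms, valid when `z 0 = 0`. -/
lemma goyB_decomp (k₀ : ℝ) (x y z : ℕ → ℂ) (hz0 : z 0 = 0) (n : ℕ) :
    goyB k₀ x y n * (starRingEnd ℂ) (z n) =
      trm k₀ (1 / 4) x y z (· + 1) (· - 1) n
        + trm k₀ (-(1 / 2)) x y z (· + 1) (· + 2) n
        + trm k₀ (-(1 / 2)) x y z (· + 2) (· + 1) n
        + trm k₀ (1 / 8) x y z (· - 1) (· - 2) n := by
  rcases n with _ | m
  · simp [goyB, trm, hz0]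
  · simp only [goyB, trm, Nat.succ_ne_zero, if_false]
    ring

lemma goyB_bilin (k₀ : ℝ) (u v : ℕ → ℂ) (n : ℕ) :
    goyB k₀ u u n - goyB k₀ v v n = goyB k₀ (u - v) v n + goyB k₀ u (u - v) n := by
  rcases n with _ | m
  · simp [goyB]
  · simp only [goyB, Nat.succ_ne_zero, if_false, Pi.sub_apply, map_sub]
    ring

end Aux

/-- For `u, v ∈ V` and `w = u − v`,
`(B(u,u) − B(v,v), w) = (B(w,v), w)` in the real inner product of `H`. -/
theorem stmt_8 (k₀ : ℝ) (hk₀ : 0 < k₀) (u v : ℕ → ℂ) (hu0 : u 0 = 0)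
    (hv0 : v 0 = 0) (hu : memV k₀ u) (hv : memV k₀ v) :
    (∑' n, (goyB k₀ u u n - goyB k₀ v v n) * (starRingEnd ℂ) ((u - v) n)).re =
      (∑' n, goyB k₀ (u - v) v n * (starRingEnd ℂ) ((u - v) n)).re := by
  set w : ℕ → ℂ := u - v with hwdef
  have hw0 : w 0 = 0 := by simp [hwdef, hu0, hv0]
  have hw : memV k₀ w := by
    refine Summable.of_nonneg_of_le (fun n => by positivity) (fun n => ?_)
      ((hu.mul_left 2).add (hv.mul_left 2))
    have h1 : ‖w n‖ ≤ ‖u n‖ + ‖v n‖ := by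
      rw [hwdef]; exact norm_sub_le _ _
    have h2 : ‖w n‖ ^ 2 ≤ 2 * ‖u n‖ ^ 2 + 2 * ‖v n‖ ^ 2 := by
      nlinarith [norm_nonneg (u n), norm_nonneg (v n), norm_nonneg (w n),
        sq_nonneg (‖u n‖ - ‖v n‖)]
    nlinarith [mul_le_mul_of_nonneg_left h2 (sq_nonneg (kk k₀ n))]
  have huH := memH_of_memV hk₀ hu
  have hvH := memH_of_memV hk₀ hv
  have hwH := memH_of_memV hk₀ hw
  obtain ⟨Mv, hMv0, hMv⟩ := bound_of_memH hvH
  obtain ⟨Mw, hMw0, hMw⟩ := bound_of_memH hwH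
  -- shift hypotheses
  have hσ1 : ∀ n : ℕ, n ≤ (n + 1) + 2 := fun n => by omega
  have hσ2 : ∀ n : ℕ, n ≤ (n + 2) + 2 := fun n => by omega
  have hσs : ∀ n : ℕ, n ≤ (n - 1) + 2 := fun n => by omega
  -- RHS summability: x = w, y = v, z = w
  have hS1a := trm_summable hk₀ (1/4) (x := w) (y := v) (z := w) (· + 1) (· - 1) hσ1
    (shiftV_add hw 1) hMv0 hMv hwH
  have hS1b := trm_summable hk₀ (-(1/2)) (x := w) (y := v) (z := w) (· + 1) (· + 2) hσ1
    (shiftV_add hw 1) hMv0 hMv hwH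
  have hS1c := trm_summable hk₀ (-(1/2)) (x := w) (y := v) (z := w) (· + 2) (· + 1) hσ2
    (shiftV_add hw 2) hMv0 hMv hwH
  have hS1d := trm_summable hk₀ (1/8) (x := w) (y := v) (z := w) (· - 1) (· - 2) hσs
    (shiftV_sub hw) hMv0 hMv hwH
  have hS1 : Summable fun n => goyB k₀ w v n * (starRingEnd ℂ) (w n) := by
    have : (fun n => goyB k₀ w v n * (starRingEnd ℂ) (w n)) =
        fun n => trm k₀ (1/4) w v w (· + 1) (· - 1) n
          + trm k₀ (-(1/2)) w v w (· + 1) (· + 2) n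
          + trm k₀ (-(1/2)) w v w (· + 2) (· + 1) n
          + trm k₀ (1/8) w v w (· - 1) (· - 2) n := by
      funext n; exact goyB_decomp k₀ w v w hw0 n
    rw [this]
    exact ((hS1a.add hS1b).add hS1c).add hS1d
  -- elementary terms for f = goyB u w · conj w
  set t1 : ℕ → ℂ := trm k₀ (1/4) u w w (· + 1) (· - 1) with ht1def
  set a : ℕ → ℂ := trm k₀ (-(1/2)) u w w (· + 1) (· + 2) with hadef
  set b : ℕ → ℂ := trm k₀ (-(1/2)) u w w (· + 2) (· + 1) with hbdef
  set t4 : ℕ → ℂ := trm k₀ (1/8) u w w (· - 1) (· - 2) with ht4def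
  have hT1 : Summable t1 := trm_summable hk₀ _ _ _ hσ1 (shiftV_add hu 1) hMw0 hMw hwH
  have hA : Summable a := trm_summable hk₀ _ _ _ hσ1 (shiftV_add hu 1) hMw0 hMw hwH
  have hB : Summable b := trm_summable hk₀ _ _ _ hσ2 (shiftV_add hu 2) hMw0 hMw hwH
  have hT4 : Summable t4 := trm_summable hk₀ _ _ _ hσs (shiftV_sub hu) hMw0 hMw hwH
  have hS2 : Summable fun n => goyB k₀ u w n * (starRingEnd ℂ) (w n) := by
    have : (fun n => goyB k₀ u w n * (starRingEnd ℂ) (w n)) =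
        fun n => t1 n + a n + b n + t4 n := by
      funext n; exact goyB_decomp k₀ u w w hw0 n
    rw [this]
    exact ((hT1.add hA).add hB).add hT4
  have ha0 : a 0 = 0 := by simp [hadef, trm, hw0]
  have hb0 : b 0 = 0 := by simp [hbdef, trm, hw0]
  -- the telescoping identities
  have hcw0 : (starRingEnd ℂ) (w 0) = 0 := by rw [hw0]; simp
  have ht1b : ∀ n, t1 n = -b (n - 1) := by
    intro n
    rcases n with _ | m
    · simp [ht1def, hbdef, trm, hw0]
    · simp only [ht1def, hbdef, trm, Nat.succ_sub_one]
      rw [kk_succ]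
      push_cast
      ring
  have ht4a : ∀ n, t4 n = -a (n - 2) := by
    intro n
    rcases n with _ | m
    · simp [ht4def, hadef, trm, hw0, hu0]
    rcases m with _ | m
    · simp [ht4def, hadef, trm, hw0, hu0]
    · show t4 (m + 2) = -a m
      simp only [ht4def, hadef, trm]
      have h2 : m + 2 - 1 = m + 1 := by omega
      have h3 : m + 2 - 2 = m := by omega
      rw [h2, h3, kk_succ, kk_succ]
      push_cast
      ring
  -- the shifted sums coincide
  have hBshift : Summable (fun n => b (n - 1)) := by
    have : (fun n => b (n - 1)) = fun n => -t1 n := by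
      funext n; rw [ht1b n]; ring
    rw [this]; exact hT1.neg
  have htsum_b : ∑' n, b (n - 1) = ∑' n, b n := by
    rw [Summable.tsum_eq_zero_add hBshift]
    simp only [Nat.zero_sub, hb0, Nat.succ_sub_one, zero_add]
  have hAshift2 : Summable (fun n => a (n - 2)) := by
    have : (fun n => a (n - 2)) = fun n => -t4 n := by
      funext n; rw [ht4a n]; ring
    rw [this]; exact hT4.neg
  have hAshift1 : Summable (fun n => a (n - 1)) := by
    have := (summable_nat_add_iff 1).mpr hAshift2
    simpa [Nat.succ_sub_succ] using this
  have htsum_a : ∑' n, a (n - 2) = ∑' n, a n := by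
    rw [Summable.tsum_eq_zero_add hAshift2]
    simp only [Nat.zero_sub, ha0, zero_add, Nat.succ_sub_succ]
    rw [Summable.tsum_eq_zero_add hAshift1]
    simp only [Nat.zero_sub, ha0, Nat.succ_sub_one, zero_add]
  -- the key cancellation
  have hzero : ∑' n, goyB k₀ u w n * (starRingEnd ℂ) (w n) = 0 := by
    have heq : (fun n => goyB k₀ u w n * (starRingEnd ℂ) (w n)) =
        fun n => t1 n + a n + b n + t4 n := by
      funext n; exact goyB_decomp k₀ u w w hw0 n
    rw [heq]
    rw [Summable.tsum_add ((hT1.add hA).add hB) hT4, Summable.tsum_add (hT1.add hA) hB, Summable.tsum_add hT1 hA]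
    have e1 : ∑' n, t1 n = -∑' n, b n := by
      rw [show t1 = fun n => -b (n - 1) from funext ht1b, tsum_neg, htsum_b]
    have e4 : ∑' n, t4 n = -∑' n, a n := by
      rw [show t4 = fun n => -a (n - 2) from funext ht4a, tsum_neg, htsum_a]
    rw [e1, e4]
    ring
  -- final assembly
  have hmain : ∑' n, (goyB k₀ u u n - goyB k₀ v v n) * (starRingEnd ℂ) ((u - v) n) =
      ∑' n, goyB k₀ (u - v) v n * (starRingEnd ℂ) ((u - v) n) := by
    have hcongr : (fun n => (goyB k₀ u u n - goyB k₀ v v n) * (starRingEnd ℂ) ((u - v) n)) =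
        fun n => goyB k₀ w v n * (starRingEnd ℂ) (w n) + goyB k₀ u w n * (starRingEnd ℂ) (w n) := by
      funext n
      rw [goyB_bilin k₀ u v n]
      rw [← hwdef]
      ring
    calc ∑' n, (goyB k₀ u u n - goyB k₀ v v n) * (starRingEnd ℂ) ((u - v) n)
        = ∑' n, (goyB k₀ w v n * (starRingEnd ℂ) (w n) + goyB k₀ u w n * (starRingEnd ℂ) (w n)) := by
          rw [hcongr]
      _ = (∑' n, goyB k₀ w v n * (starRingEnd ℂ) (w n))
            + ∑' n, goyB k₀ u w n * (starRingEnd ℂ) (w n) := Summable.tsum_add hS1 hS2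
      _ = ∑' n, goyB k₀ (u - v) v n * (starRingEnd ℂ) ((u - v) n) := by
          rw [hzero, add_zero, ← hwdef]
  rw [hmain]
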